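/- Let f_0(z,w) = (z^δ, z^γ w^d) with δ > d ≥ 1 and γ > 0, and let U = {|z| < r, |w| < r} for some 0 < r < 1 (Case 1). Then the union A = ⋃_{n≥0} f_0^{-n}(U) of all preimages of U under f_0 equals {(z,w) : |z| < 1}. -/
import Mathlib

private def gam (δ d γ : ℕ) : ℕ → ℕ
  | 0 => 0
  | n + 1 => γ * δ ^ n + d * gam δ d γ n

private lemma gam_ge (δ d γ : ℕ) (hγ : 0 < γ) (n : ℕ) :
    δ ^ n ≤ gam δ d γ (n + 1) := by
  have : 1 * δ ^ n ≤ γ * δ ^ n := Nat.mul_le_mul_right _ hγ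
  simpa [gam] using this.trans (Nat.le_add_right _ _)

private lemma iter_formula (δ d γ : ℕ)
    (f0 : ℂ × ℂ → ℂ × ℂ) (hf0 : ∀ p, f0 p = (p.1 ^ δ, p.1 ^ γ * p.2 ^ d))
    (p : ℂ × ℂ) (n : ℕ) :
    f0^[n] p = (p.1 ^ δ ^ n, p.1 ^ gam δ d γ n * p.2 ^ d ^ n) := by
  induction n with
  | zero => simp [gam]
  | succ n ih =>
      rw [Function.iterate_succ_apply', ih, hf0]
      simp only [gam, Prod.mk.injEq]
      constructor <;> ring

/-- for f₀(z,w) = (z^δ, z^γ w^d) with δ > d ≥ 1 and γ > 0, and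
U = {|z| < r, |w| < r} with 0 < r < 1, the union A = ⋃_{n ≥ 0} f₀⁻ⁿ(U) of all preimages
of U under f₀ equals {(z,w) : |z| < 1}. -/
theorem stmt17
    (δ d γ : ℕ) (hδd : d < δ) (hd : 1 ≤ d) (hγ : 0 < γ)
    (r : ℝ) (hr0 : 0 < r) (hr1 : r < 1)
    (f0 : ℂ × ℂ → ℂ × ℂ) (hf0 : ∀ p, f0 p = (p.1 ^ δ, p.1 ^ γ * p.2 ^ d))
    (U A : Set (ℂ × ℂ))
    (hU : U = {p : ℂ × ℂ | ‖p.1‖ < r ∧ ‖p.2‖ < r})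
    (hA : A = ⋃ n : ℕ, f0^[n] ⁻¹' U) :
    A = {p : ℂ × ℂ | ‖p.1‖ < 1} := by
  subst hU hA
  ext p
  simp only [Set.mem_iUnion, Set.mem_preimage, Set.mem_setOf_eq]
  constructor
  · rintro ⟨n, h1, -⟩
    rw [iter_formula δ d γ f0 hf0 p n] at h1
    simp only [norm_pow] at h1
    by_contra hcon
    push_neg at hcon
    have : (1:ℝ) ≤ ‖p.1‖ ^ δ ^ n := one_le_pow₀ hcon
    linarith
  · intro hz
    set a := ‖p.1‖ with ha
    set b := ‖p.2‖ with hb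
    have ha0 : 0 ≤ a := norm_nonneg _
    have hb0 : 0 ≤ b := norm_nonneg _
    by_cases hz0 : p.1 = 0
    · refine ⟨1, ?_⟩
      rw [iter_formula δ d γ f0 hf0 p 1]
      have hδ0 : δ ≠ 0 := by omega
      have hγ0 : gam δ d γ 1 ≠ 0 := by simp [gam]; omega
      simp [hz0, zero_pow, hδ0, hγ0, pow_one, hr0]
    · set M : ℝ := max b 1 with hM
      have hM1 : 1 ≤ M := le_max_right _ _
      have hM0 : 0 < M := lt_of_lt_of_le one_pos hM1
      -- choose K with a^K < r / M
      obtain ⟨K, hK⟩ := exists_pow_lt_of_lt_one (div_pos hr0 hM0) hz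
      have haKM : a ^ K * M < r := by
        rw [← lt_div_iff₀ hM0]; exact hK
      -- choose n with K * d^(n+1) ≤ δ^n
      have hdio : (1:ℝ) < (δ:ℝ) / d := by
        rw [lt_div_iff₀ (by positivity)]
        exact_mod_cast by simpa using hδd
      obtain ⟨n, hn⟩ := pow_unbounded_of_one_lt ((K:ℝ) * d) hdio
      have hKd : K * d ^ (n + 1) ≤ δ ^ n := by
        have hd0 : (0:ℝ) < (d:ℝ) ^ n := by positivity
        rw [div_pow, lt_div_iff₀ hd0] at hn
        have : ((K * d ^ (n+1) : ℕ) : ℝ) ≤ ((δ ^ n : ℕ) : ℝ) := by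
          push_cast
          calc (K:ℝ) * d ^ (n+1) = (K:ℝ) * d * d ^ n := by ring
          _ ≤ (δ:ℝ)^n := le_of_lt hn
        exact_mod_cast this
      refine ⟨n + 1, ?_⟩
      rw [iter_formula δ d γ f0 hf0 p (n + 1)]
      have ha1 : a < 1 := hz
      have he0 : d ^ (n+1) ≠ 0 := by positivity
      constructor
      · simp only [norm_pow, ← ha]
        have h1 : a ^ (δ ^ (n+1)) ≤ a ^ K :=
          pow_le_pow_of_le_one ha0 ha1.le
            (le_trans (Nat.le_mul_of_pos_right K (by positivity)) (hKd.trans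
              (Nat.pow_le_pow_right (by omega) (by omega))))
        have h2 : a ^ K ≤ a ^ K * M := le_mul_of_one_le_right (by positivity) hM1
        linarith
      · simp only [norm_mul, norm_pow, ← ha, ← hb]
        have h1 : a ^ gam δ d γ (n+1) ≤ a ^ (δ ^ n) :=
          pow_le_pow_of_le_one ha0 ha1.le (gam_ge δ d γ hγ n)
        have h2 : b ^ d ^ (n+1) ≤ M ^ d ^ (n+1) :=
          pow_le_pow_left₀ hb0 (le_max_left _ _) _
        calc a ^ gam δ d γ (n+1) * b ^ d ^ (n+1)
            ≤ a ^ (δ ^ n) * M ^ d ^ (n+1) :=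
              mul_le_mul h1 h2 (by positivity) (by positivity)
        _ ≤ (a ^ K) ^ (d ^ (n+1)) * M ^ d ^ (n+1) := by
              apply mul_le_mul_of_nonneg_right _ (by positivity)
              rw [← pow_mul]
              exact pow_le_pow_of_le_one ha0 ha1.le hKd
        _ = (a ^ K * M) ^ (d ^ (n+1)) := (mul_pow _ _ _).symm
        _ ≤ a ^ K * M := pow_le_of_le_one (by positivity)
              (le_of_lt (haKM.trans hr1)) he0
        _ < r := haKM
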